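/- arXiv:1404.2831 — 5 statements merged into one kernel-verified Lean document; each statement's English description precedes it below -/
import Mathlib

section
/- Consider the triangle graph T with vertex set {A,B,C} and edges BC, CA, AB, where edge BC is open with probability p0, CA with probability p1, AB with probability p2, independently; and the star graph S with vertex set {A,B,C,O} and edges OA, OB, OC, where OA is open with probability 1−p0, OB with probability 1−p1, OC with probability 1−p2, independently. If p0, p1, p2 ∈ [0,1) satisfy p0 + p1 + p2 − p0·p1·p2 = 1, then the random vector (1_{A↔B}, 1_{B↔C}, 1_{C↔A}) of indicators of open connections among A, B, C has the same distribution under the percolation measure on T as under the percolation measure on S. -/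
open Finset

/-- Connectivity indicators `(1_{A↔B}, 1_{B↔C}, 1_{C↔A})` in the triangle `T` with
vertices `{A,B,C}`, where `ω 0` is the state of edge `BC`, `ω 1` that of `CA`,
and `ω 2` that of `AB`. -/
def triConn (ω : Fin 3 → Bool) : Bool × Bool × Bool :=
  (ω 2 || (ω 1 && ω 0), ω 0 || (ω 2 && ω 1), ω 1 || (ω 0 && ω 2))

/-- Connectivity indicators `(1_{A↔B}, 1_{B↔C}, 1_{C↔A})` in the star `S` with
vertices `{A,B,C,O}`, where `η 0` is the state of edge `OA`, `η 1` that of `OB`,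
and `η 2` that of `OC`. -/
def starConn (η : Fin 3 → Bool) : Bool × Bool × Bool :=
  (η 0 && η 1, η 1 && η 2, η 2 && η 0)

/-- Probability of the configuration `ω` of the triangle: edge `BC` is open with
probability `p 0`, `CA` with probability `p 1`, `AB` with probability `p 2`,
independently. -/
noncomputable def triProb (p : Fin 3 → ℝ) (ω : Fin 3 → Bool) : ℝ :=
  ∏ i, (if ω i then p i else 1 - p i)

/-- Probability of the configuration `η` of the star: edge `OA` is open with
probability `1 - p 0`, `OB` with probability `1 - p 1`, `OC` with probability
`1 - p 2`, independently. -/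
noncomputable def starProb (p : Fin 3 → ℝ) (η : Fin 3 → Bool) : ℝ :=
  ∏ i, (if η i then 1 - p i else p i)


private def e3Aux : (Bool × Bool × Bool) ≃ (Fin 3 → Bool) where
  toFun x := ![x.1, x.2.1, x.2.2]
  invFun ω := (ω 0, ω 1, ω 2)
  left_inv x := rfl
  right_inv ω := by funext i; fin_cases i <;> rfl

private lemma sum_fin3Aux (f : (Fin 3 → Bool) → ℝ) :
    ∑ ω : Fin 3 → Bool, f ω = ∑ x : Bool × Bool × Bool, f ![x.1, x.2.1, x.2.2] :=
  (Fintype.sum_equiv e3Aux _ _ fun _ => rfl).symm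

/-- **Star–triangle transformation for bond percolation.** If
`p 0 + p 1 + p 2 - p 0 * p 1 * p 2 = 1`, then the vector of connectivity
indicators among `A, B, C` has the same distribution under the percolation
measure on the triangle `T` as under the percolation measure on the star `S`. -/
theorem star_triangle_percolation (p : Fin 3 → ℝ)
    (hp : ∀ i, 0 ≤ p i ∧ p i < 1)
    (hκ : p 0 + p 1 + p 2 - p 0 * p 1 * p 2 = 1)
    (abc : Bool × Bool × Bool) :
    (∑ ω : Fin 3 → Bool, if triConn ω = abc then triProb p ω else 0) =
    (∑ η : Fin 3 → Bool, if starConn η = abc then starProb p η else 0) := by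
  rw [sum_fin3Aux, sum_fin3Aux]
  obtain ⟨a, b, c⟩ := abc
  cases a <;> cases b <;> cases c <;>
    simp [Fintype.sum_prod_type, triConn, starConn, triProb, starProb,
      Fin.prod_univ_three, Matrix.cons_val_zero, Matrix.cons_val_one] <;>
    first | linear_combination hκ | linear_combination -hκ | linear_combination -2*hκ
end

section
/- Let θ0, θ1, θ2 ∈ (0,π) satisfy θ0 + θ1 + θ2 = 2π, and for i = 0,1,2 define p_i ∈ (0,1) by p_i/(1−p_i) = sin((π−θ_i)/3)/sin(θ_i/3). Then p0 + p1 + p2 − p0·p1·p2 = 1. -/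
open Real

/-- Key trigonometric identity behind the star–triangle relation. -/
lemma star_triangle_key (b0 b1 b2 : ℝ) (h : b0 + b1 + b2 = Real.pi / 3) :
    Real.sin b0 * Real.sin b1 * Real.sin (b0 + b1)
      + Real.sin b1 * Real.sin b2 * Real.sin (b1 + b2)
      + Real.sin b0 * Real.sin b2 * Real.sin (b0 + b2)
      + Real.sin b0 * Real.sin b1 * Real.sin b2
    = Real.sin (b1 + b2) * Real.sin (b0 + b2) * Real.sin (b0 + b1) := by
  have hC : Real.cos b0 * (Real.cos b1 * Real.cos b2 - Real.sin b1 * Real.sin b2)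
      - Real.sin b0 * (Real.sin b1 * Real.cos b2 + Real.cos b1 * Real.sin b2) = 1 / 2 := by
    have : Real.cos (b0 + (b1 + b2)) = 1 / 2 := by
      have : b0 + (b1 + b2) = Real.pi / 3 := by linarith
      rw [this, Real.cos_pi_div_three]
    rw [Real.cos_add, Real.cos_add, Real.sin_add] at this
    linarith [this]
  have h0 := Real.sin_sq_add_cos_sq b0
  have h1 := Real.sin_sq_add_cos_sq b1
  have h2 := Real.sin_sq_add_cos_sq b2
  set s0 := Real.sin b0
  set s1 := Real.sin b1
  set s2 := Real.sin b2
  set c0 := Real.cos b0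
  set c1 := Real.cos b1
  set c2 := Real.cos b2
  rw [Real.sin_add, Real.sin_add, Real.sin_add]
  linear_combination (-(s1 * s2 ^ 2 * c1) - s1 ^ 2 * s2 * c2) * h0
    + (-(s0 * s2 ^ 2 * c0) - s0 ^ 2 * s2 * c2) * h1
    + (-(s0 * s1 ^ 2 * c0) - s0 ^ 2 * s1 * c1) * h2
    - 2 * s0 * s1 * s2 * hC

/-- **Isoradial edge-probabilities satisfy the star–triangle condition.**
If `θ 0, θ 1, θ 2 ∈ (0, π)` sum to `2π` and each `p i ∈ (0,1)` satisfies
`p i / (1 - p i) = sin((π - θ i)/3) / sin(θ i / 3)`, then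
`p 0 + p 1 + p 2 - p 0 * p 1 * p 2 = 1`. -/
theorem isoradial_star_triangle_condition (θ p : Fin 3 → ℝ)
    (hθ : ∀ i, 0 < θ i ∧ θ i < Real.pi)
    (hsum : θ 0 + θ 1 + θ 2 = 2 * Real.pi)
    (hp : ∀ i, 0 < p i ∧ p i < 1)
    (hpe : ∀ i, p i / (1 - p i) =
      Real.sin ((Real.pi - θ i) / 3) / Real.sin (θ i / 3)) :
    p 0 + p 1 + p 2 - p 0 * p 1 * p 2 = 1 := by
  have hpi := Real.pi_pos
  have hsa : ∀ i, 0 < Real.sin (θ i / 3) := fun i =>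
    Real.sin_pos_of_pos_of_lt_pi (by linarith [(hθ i).1]) (by linarith [(hθ i).2])
  have hsb : ∀ i, 0 < Real.sin ((Real.pi - θ i) / 3) := fun i =>
    Real.sin_pos_of_pos_of_lt_pi (by linarith [(hθ i).2]) (by linarith [(hθ i).1])
  -- p i = sin b_i / (sin a_i + sin b_i)
  have hpf : ∀ i, p i = Real.sin ((Real.pi - θ i) / 3)
      / (Real.sin (θ i / 3) + Real.sin ((Real.pi - θ i) / 3)) := by
    intro i
    have h1 : (1 : ℝ) - p i ≠ 0 := by linarith [(hp i).2]
    have h2 : Real.sin (θ i / 3) ≠ 0 := ne_of_gt (hsa i)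
    have h3 : Real.sin (θ i / 3) + Real.sin ((Real.pi - θ i) / 3) ≠ 0 :=
      ne_of_gt (by linarith [hsa i, hsb i])
    have := hpe i
    field_simp at this ⊢
    linarith [this]
  have e0 := hpf 0
  have e1 := hpf 1
  have e2 := hpf 2
  have hb : (Real.pi - θ 0) / 3 + (Real.pi - θ 1) / 3 + (Real.pi - θ 2) / 3
      = Real.pi / 3 := by linarith
  have ha0 : θ 0 / 3 = (Real.pi - θ 1) / 3 + (Real.pi - θ 2) / 3 := by linarith
  have ha1 : θ 1 / 3 = (Real.pi - θ 0) / 3 + (Real.pi - θ 2) / 3 := by linarith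
  have ha2 : θ 2 / 3 = (Real.pi - θ 0) / 3 + (Real.pi - θ 1) / 3 := by linarith
  have key := star_triangle_key ((Real.pi - θ 0) / 3) ((Real.pi - θ 1) / 3)
    ((Real.pi - θ 2) / 3) hb
  rw [e0, e1, e2]
  have hd : ∀ i, Real.sin (θ i / 3) + Real.sin ((Real.pi - θ i) / 3) ≠ 0 :=
    fun i => ne_of_gt (by linarith [hsa i, hsb i])
  rw [ha0, ha1, ha2]
  set S0 := Real.sin ((Real.pi - θ 1) / 3 + (Real.pi - θ 2) / 3) with hS0
  set S1 := Real.sin ((Real.pi - θ 0) / 3 + (Real.pi - θ 2) / 3) with hS1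
  set S2 := Real.sin ((Real.pi - θ 0) / 3 + (Real.pi - θ 1) / 3) with hS2
  set t0 := Real.sin ((Real.pi - θ 0) / 3) with ht0
  set t1 := Real.sin ((Real.pi - θ 1) / 3) with ht1
  set t2 := Real.sin ((Real.pi - θ 2) / 3) with ht2
  have hd0 : S0 + t0 ≠ 0 := by
    have := hd 0; rw [ha0] at this; rw [hS0, ht0]; linarith [hsa 0, hsb 0,
      (ha0 ▸ hsa 0 : (0:ℝ) < Real.sin ((Real.pi - θ 1) / 3 + (Real.pi - θ 2) / 3)), hsb 0]
  have hd1 : S1 + t1 ≠ 0 := by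
    rw [hS1, ht1]; linarith [(ha1 ▸ hsa 1 : (0:ℝ) < Real.sin ((Real.pi - θ 0) / 3 + (Real.pi - θ 2) / 3)), hsb 1]
  have hd2 : S2 + t2 ≠ 0 := by
    rw [hS2, ht2]; linarith [(ha2 ▸ hsa 2 : (0:ℝ) < Real.sin ((Real.pi - θ 0) / 3 + (Real.pi - θ 1) / 3)), hsb 2]
  field_simp
  linear_combination key
end

section
/- Let q ≥ 1 and y0, y1, y2 ∈ (0,∞) satisfy y0·y1·y2 + y0·y1 + y1·y2 + y2·y0 = q. Consider the random-cluster measure with cluster-weighting factor q on the triangle graph T with vertices {A,B,C} and edges BC, CA, AB carrying edge-weights y0, y1, y2 respectively, and on the star graph S with vertices {A,B,C,O} and edges OA, OB, OC carrying edge-weights q/y0, q/y1, q/y2 respectively. Then the random partition of {A,B,C} induced by the open clusters has the same distribution under the two measures; equivalently, the random vector (1_{A↔B}, 1_{B↔C}, 1_{C↔A}) is equidistributed under the two measures. -/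
open Finset

/-- The number of open edges of a configuration. -/
def openCount (ω : Fin 3 → Bool) : ℕ := (univ.filter fun i => ω i = true).card

/-- Number of open clusters of the triangle on `{A,B,C}` (isolated vertices
count): `3` minus the number of open edges, except that three open edges give
a single cluster. -/
def kTri (ω : Fin 3 → Bool) : ℕ := max 1 (3 - openCount ω)

/-- Number of open clusters of the star on `{A,B,C,O}` (isolated vertices
count): `4` minus the number of open edges. -/
def kStar (η : Fin 3 → Bool) : ℕ := 4 - openCount η

/-- Random-cluster weight of a triangle configuration, with cluster-weighting
factor `q` and edge-weights `y 0, y 1, y 2` on `BC`, `CA`, `AB`. -/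
noncomputable def triWeight (q : ℝ) (y : Fin 3 → ℝ) (ω : Fin 3 → Bool) : ℝ :=
  q ^ kTri ω * ∏ i, (if ω i then y i else 1)

/-- Random-cluster weight of a star configuration, with cluster-weighting
factor `q` and edge-weights `q / y 0, q / y 1, q / y 2` on `OA`, `OB`, `OC`. -/
noncomputable def starWeight (q : ℝ) (y : Fin 3 → ℝ) (η : Fin 3 → Bool) : ℝ :=
  q ^ kStar η * ∏ i, (if η i then q / y i else 1)

def e3 : (Bool × Bool × Bool) ≃ (Fin 3 → Bool) where
  toFun p := ![p.1, p.2.1, p.2.2]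
  invFun ω := (ω 0, ω 1, ω 2)
  left_inv _ := rfl
  right_inv ω := by funext i; fin_cases i <;> rfl

lemma sum_pi3 (f : (Fin 3 → Bool) → ℝ) :
    ∑ ω : Fin 3 → Bool, f ω = ∑ p : Bool × Bool × Bool, f ![p.1, p.2.1, p.2.2] :=
  (Fintype.sum_equiv e3 _ _ fun _ => rfl).symm

lemma kT0 : kTri ![true, true, true] = 1 := by decide
lemma kS0 : kStar ![true, true, true] = 1 := by decide
lemma kT1 : kTri ![true, true, false] = 1 := by decide
lemma kS1 : kStar ![true, true, false] = 2 := by decide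
lemma kT2 : kTri ![true, false, true] = 1 := by decide
lemma kS2 : kStar ![true, false, true] = 2 := by decide
lemma kT3 : kTri ![true, false, false] = 2 := by decide
lemma kS3 : kStar ![true, false, false] = 3 := by decide
lemma kT4 : kTri ![false, true, true] = 1 := by decide
lemma kS4 : kStar ![false, true, true] = 2 := by decide
lemma kT5 : kTri ![false, true, false] = 2 := by decide
lemma kS5 : kStar ![false, true, false] = 3 := by decide
lemma kT6 : kTri ![false, false, true] = 2 := by decide
lemma kS6 : kStar ![false, false, true] = 3 := by decide
lemma kT7 : kTri ![false, false, false] = 3 := by decide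
lemma kS7 : kStar ![false, false, false] = 4 := by decide

set_option maxHeartbeats 2000000 in
/-- **Star–triangle transformation for the random-cluster model.** Let `q ≥ 1`
and let `y 0, y 1, y 2 > 0` satisfy the Yang–Baxter condition
`y0 y1 y2 + y0 y1 + y1 y2 + y2 y0 = q`. Then the vector of connectivity
indicators among `A, B, C` is equidistributed under the random-cluster measure
on the triangle with edge-weights `y i` and under that on the star with
edge-weights `q / y i`. -/
theorem star_triangle_random_cluster (q : ℝ) (hq : 1 ≤ q)
    (y : Fin 3 → ℝ) (hy : ∀ i, 0 < y i)
    (hψ : y 0 * y 1 * y 2 + y 0 * y 1 + y 1 * y 2 + y 2 * y 0 = q)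
    (abc : Bool × Bool × Bool) :
    (∑ ω : Fin 3 → Bool, if triConn ω = abc then triWeight q y ω else 0) /
        (∑ ω : Fin 3 → Bool, triWeight q y ω) =
      (∑ η : Fin 3 → Bool, if starConn η = abc then starWeight q y η else 0) /
        (∑ η : Fin 3 → Bool, starWeight q y η) := by
  have hq0 : 0 < q := lt_of_lt_of_le one_pos hq
  have h0 := hy 0; have h1 := hy 1; have h2 := hy 2
  subst hψ
  simp only [sum_pi3, Fintype.sum_prod_type, Fintype.sum_bool, triWeight, starWeight,
    triConn, starConn, kT0, kT1, kT2, kT3, kT4, kT5, kT6, kT7, kS0, kS1, kS2, kS3, kS4, kS5, kS6, kS7,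
    Fin.prod_univ_three, Matrix.cons_val_zero, Matrix.cons_val_one, Matrix.head_cons,
    Matrix.cons_val_two, Matrix.tail_cons, if_true, Bool.or_true, Bool.true_or,
    Bool.and_true, Bool.true_and, Bool.or_false, Bool.false_or, Bool.and_false,
    Bool.false_and, Bool.false_eq_true, if_false]
  obtain ⟨a, b, c⟩ := abc
  rw [div_eq_div_iff (by positivity) (by positivity)]
  cases a <;> cases b <;> cases c <;>
    simp only [Prod.mk.injEq, and_true, and_false, false_and, true_and, if_true, if_false,
      reduceCtorEq, and_self, if_neg, not_false_iff] <;>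
    norm_num <;> field_simp <;> ring
end

section
/- Let 1 ≤ q < 4 and let σ ∈ (0,1) satisfy cos(σπ/2) = √q/2. Let θ0, θ1, θ2 ∈ (0,π) with θ0 + θ1 + θ2 = 2π, and define y_i = √q · sin(σ(π−θ_i)/2) / sin(σθ_i/2) for i = 0,1,2. Then y0·y1·y2 + y0·y1 + y1·y2 + y2·y0 = q. -/
lemma star_tri_key (A B C : ℝ) :
    Real.sin (B+C) * Real.sin (C+A) * Real.sin (A+B) =
      2 * Real.cos (A+B+C) * (Real.sin A * Real.sin B * Real.sin C)
      + Real.sin A * Real.sin B * Real.sin (A+B)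
      + Real.sin B * Real.sin C * Real.sin (B+C)
      + Real.sin C * Real.sin A * Real.sin (C+A) := by
  simp only [Real.sin_add, Real.cos_add]
  linear_combination
    (Real.sin B^2 * Real.sin C * Real.cos C + Real.sin B * Real.sin C^2 * Real.cos B) *
      (Real.sin_sq_add_cos_sq A)
    + (Real.sin A^2 * Real.sin B * Real.cos B + Real.sin A * Real.sin B^2 * Real.cos A) *
      (Real.sin_sq_add_cos_sq C)
    + (Real.sin A * Real.sin C^2 * Real.cos A + Real.sin A^2 * Real.sin C * Real.cos C) *
      (Real.sin_sq_add_cos_sq B)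

/-- **The isoradial random-cluster parametrization for `1 ≤ q < 4` satisfies the
star–triangle condition.** Let `1 ≤ q < 4`, let `σ ∈ (0,1)` satisfy
`cos(σπ/2) = √q/2`, let `θ 0, θ 1, θ 2 ∈ (0,π)` sum to `2π`, and set
`y i = √q · sin(σ(π−θᵢ)/2) / sin(σθᵢ/2)`. Then
`y0 y1 y2 + y0 y1 + y1 y2 + y2 y0 = q`. -/
theorem isoradial_rc_star_triangle_small_q
    (q : ℝ) (hq1 : 1 ≤ q) (hq4 : q < 4)
    (σ : ℝ) (hσ0 : 0 < σ) (hσ1 : σ < 1)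
    (hcos : Real.cos (σ * Real.pi / 2) = Real.sqrt q / 2)
    (θ : Fin 3 → ℝ) (hθ : ∀ i, 0 < θ i ∧ θ i < Real.pi)
    (hsum : θ 0 + θ 1 + θ 2 = 2 * Real.pi)
    (y : Fin 3 → ℝ)
    (hy : ∀ i, y i = Real.sqrt q *
      Real.sin (σ * (Real.pi - θ i) / 2) / Real.sin (σ * θ i / 2)) :
    y 0 * y 1 * y 2 + y 0 * y 1 + y 1 * y 2 + y 2 * y 0 = q := by
  have hpi := Real.pi_pos
  have hsin : ∀ i, 0 < Real.sin (σ * θ i / 2) := by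
    intro i
    apply Real.sin_pos_of_pos_of_lt_pi
    · have := (hθ i).1; positivity
    · nlinarith [(hθ i).1, (hθ i).2, mul_lt_mul_of_pos_left (hθ i).2 hσ0]
  have hq0 : (0:ℝ) ≤ q := by linarith
  have hqsq : Real.sqrt q ^ 2 = q := Real.sq_sqrt hq0
  set A := σ * (Real.pi - θ 0) / 2 with hA
  set B := σ * (Real.pi - θ 1) / 2 with hB
  set C := σ * (Real.pi - θ 2) / 2 with hC
  have h0 : σ * θ 0 / 2 = B + C := by rw [hB, hC]; linear_combination (σ/2) * hsum
  have h1 : σ * θ 1 / 2 = C + A := by rw [hC, hA]; linear_combination (σ/2) * hsum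
  have h2 : σ * θ 2 / 2 = A + B := by rw [hA, hB]; linear_combination (σ/2) * hsum
  have hs : σ * Real.pi / 2 = A + B + C := by
    rw [hA, hB, hC]; linear_combination (σ/2) * hsum
  have key := star_tri_key A B C
  have e0 : y 0 = Real.sqrt q * Real.sin A / Real.sin (B + C) := by rw [hy 0, h0]
  have e1 : y 1 = Real.sqrt q * Real.sin B / Real.sin (C + A) := by rw [hy 1, h1]
  have e2 : y 2 = Real.sqrt q * Real.sin C / Real.sin (A + B) := by rw [hy 2, h2]
  have n0 : Real.sin (B + C) ≠ 0 := by rw [← h0]; exact (hsin 0).ne'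
  have n1 : Real.sin (C + A) ≠ 0 := by rw [← h1]; exact (hsin 1).ne'
  have n2 : Real.sin (A + B) ≠ 0 := by rw [← h2]; exact (hsin 2).ne'
  have hcs : Real.cos (A + B + C) = Real.sqrt q / 2 := by rw [← hs]; exact hcos
  have m0 : y 0 * Real.sin (B + C) = Real.sqrt q * Real.sin A := by
    rw [e0, div_mul_cancel₀ _ n0]
  have m1 : y 1 * Real.sin (C + A) = Real.sqrt q * Real.sin B := by
    rw [e1, div_mul_cancel₀ _ n1]
  have m2 : y 2 * Real.sin (A + B) = Real.sqrt q * Real.sin C := by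
    rw [e2, div_mul_cancel₀ _ n2]
  have hS : Real.sin (B + C) * (Real.sin (C + A) * Real.sin (A + B)) ≠ 0 :=
    mul_ne_zero n0 (mul_ne_zero n1 n2)
  apply mul_right_cancel₀ hS
  linear_combination
    (y 1 * y 2 * Real.sin (C+A) * Real.sin (A+B) + y 1 * Real.sin (C+A) * Real.sin (A+B)
      + y 2 * Real.sin (A+B) * Real.sin (C+A)) * m0
    + (Real.sqrt q * Real.sin A * y 2 * Real.sin (A+B) + Real.sqrt q * Real.sin A * Real.sin (A+B)
      + y 2 * Real.sin (A+B) * Real.sin (B+C)) * m1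
    + (Real.sqrt q ^ 2 * Real.sin A * Real.sin B + Real.sqrt q * Real.sin B * Real.sin (B+C)
      + Real.sqrt q * Real.sin A * Real.sin (C+A)) * m2
    + (Real.sin (B+C) * Real.sin (C+A) * Real.sin (A+B)) * hqsq
    - Real.sqrt q ^ 2 * key
    - (2 * Real.sqrt q ^ 2 * Real.sin A * Real.sin B * Real.sin C) * hcs
end

section
/- Let q > 4 and let σ > 0 satisfy cosh(σπ/2) = √q/2. Let θ0, θ1, θ2 ∈ (0,π) with θ0 + θ1 + θ2 = 2π, and define y_i = √q · sinh(σ(π−θ_i)/2) / sinh(σθ_i/2) for i = 0,1,2. Then y0·y1·y2 + y0·y1 + y1·y2 + y2·y0 = q. -/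
private lemma star_triangle_key_s16 (T a b : ℝ) (hT : T ≠ 0) (ha : a ≠ 0) (hb : b ≠ 0)
    (ha1 : a - 1 ≠ 0) (hb1 : b - 1 ≠ 0) (hc1 : T ^ 2 - a * b ≠ 0) :
    ((T+1)*(T-a)/(T*(a-1))) * ((T+1)*(T-b)/(T*(b-1))) * ((T+1)*(T - T^2/(a*b))/(T*(T^2/(a*b)-1)))
    + ((T+1)*(T-a)/(T*(a-1))) * ((T+1)*(T-b)/(T*(b-1)))
    + ((T+1)*(T-b)/(T*(b-1))) * ((T+1)*(T - T^2/(a*b))/(T*(T^2/(a*b)-1)))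
    + ((T+1)*(T - T^2/(a*b))/(T*(T^2/(a*b)-1))) * ((T+1)*(T-a)/(T*(a-1)))
    = (T+1)^2/T := by
  have h2 : T * (T ^ 2 / (a * b) - 1) ≠ 0 := by
    have : T ^ 2 / (a * b) - 1 = (T ^ 2 - a * b) / (a * b) := by field_simp
    rw [this]
    exact mul_ne_zero hT (div_ne_zero hc1 (mul_ne_zero ha hb))
  field_simp
  ring

/-- **The isoradial random-cluster parametrization for `q > 4` satisfies the
star–triangle condition.** Let `q > 4`, let `σ > 0` satisfy
`cosh(σπ/2) = √q/2`, let `θ 0, θ 1, θ 2 ∈ (0,π)` sum to `2π`, and set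
`y i = √q · sinh(σ(π−θᵢ)/2) / sinh(σθᵢ/2)`. Then
`y0 y1 y2 + y0 y1 + y1 y2 + y2 y0 = q`. -/
theorem isoradial_rc_star_triangle_large_q
    (q : ℝ) (hq : 4 < q)
    (σ : ℝ) (hσ : 0 < σ)
    (hcosh : Real.cosh (σ * Real.pi / 2) = Real.sqrt q / 2)
    (θ : Fin 3 → ℝ) (hθ : ∀ i, 0 < θ i ∧ θ i < Real.pi)
    (hsum : θ 0 + θ 1 + θ 2 = 2 * Real.pi)
    (y : Fin 3 → ℝ)
    (hy : ∀ i, y i = Real.sqrt q *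
      Real.sinh (σ * (Real.pi - θ i) / 2) / Real.sinh (σ * θ i / 2)) :
    y 0 * y 1 * y 2 + y 0 * y 1 + y 1 * y 2 + y 2 * y 0 = q := by
  have hq0 : (0:ℝ) ≤ q := by linarith
  set t := Real.exp (σ * Real.pi / 2) with ht
  have ht0 : 0 < t := Real.exp_pos _
  have hsq : Real.sqrt q = t + t⁻¹ := by
    have h := hcosh
    rw [Real.cosh_eq, Real.exp_neg] at h
    linarith
  have hqe : q = (t ^ 2 + 1) ^ 2 / t ^ 2 := by
    rw [← Real.sq_sqrt hq0, hsq]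
    have := ht0.ne'
    field_simp
  set E : Fin 3 → ℝ := fun i => Real.exp (σ * θ i / 2) with hE
  have hE1 : ∀ i, 1 < E i := by
    intro i
    have h : 0 < σ * θ i / 2 := by
      have := (hθ i).1; positivity
    calc (1:ℝ) = Real.exp 0 := by simp
    _ < E i := Real.exp_lt_exp.mpr h
  have hE0 : ∀ i, 0 < E i := fun i => (zero_lt_one.trans (hE1 i))
  have hsin : ∀ i, Real.sinh (σ * θ i / 2) = (E i ^ 2 - 1) / (2 * E i) := by
    intro i
    rw [Real.sinh_eq, Real.exp_neg]
    have := (hE0 i).ne'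
    field_simp
    ring
  have hsin2 : ∀ i, Real.sinh (σ * (Real.pi - θ i) / 2) = (t ^ 2 - E i ^ 2) / (2 * t * E i) := by
    intro i
    have harg : σ * (Real.pi - θ i) / 2 = σ * Real.pi / 2 - σ * θ i / 2 := by ring
    rw [Real.sinh_eq, harg, neg_sub, Real.exp_sub, Real.exp_sub]
    have h1 := (hE0 i).ne'
    have h2 := ht0.ne'
    show (t / E i - E i / t) / 2 = _
    field_simp
  have hyy : ∀ i, y i = (t ^ 2 + 1) * (t ^ 2 - E i ^ 2) / (t ^ 2 * (E i ^ 2 - 1)) := by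
    intro i
    rw [hy i, hsq, hsin i, hsin2 i]
    have h1 := (hE0 i).ne'
    have h2 := ht0.ne'
    have h3 : E i ^ 2 - 1 ≠ 0 := by nlinarith [hE1 i]
    field_simp
  have hprod : E 0 ^ 2 * E 1 ^ 2 * E 2 ^ 2 = (t ^ 2) ^ 2 := by
    simp only [hE, ht, ← Real.exp_nat_mul, ← Real.exp_add]
    congr 1
    push_cast
    linear_combination σ * hsum
  have hab : E 0 ^ 2 * E 1 ^ 2 ≠ 0 := by positivity
  have hE2 : E 2 ^ 2 = (t ^ 2) ^ 2 / (E 0 ^ 2 * E 1 ^ 2) := by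
    rw [eq_div_iff hab]
    linear_combination hprod
  have hd0 : E 0 ^ 2 - 1 ≠ 0 := by nlinarith [hE1 0]
  have hd1 : E 1 ^ 2 - 1 ≠ 0 := by nlinarith [hE1 1]
  have hc1 : (t ^ 2) ^ 2 - E 0 ^ 2 * E 1 ^ 2 ≠ 0 := by
    have h2 : 1 < E 2 ^ 2 := by nlinarith [hE1 2]
    have : (t ^ 2) ^ 2 - E 0 ^ 2 * E 1 ^ 2 = E 0 ^ 2 * E 1 ^ 2 * (E 2 ^ 2 - 1) := by
      rw [← hprod]; ring
    rw [this]
    exact mul_ne_zero hab (by nlinarith)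
  rw [hyy 0, hyy 1, hyy 2, hqe, hE2]
  exact star_triangle_key_s16 (t ^ 2) (E 0 ^ 2) (E 1 ^ 2) (by positivity) (by positivity)
    (by positivity) hd0 hd1 hc1
end
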